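/- Fix a point u in a metric space (M,d) with its Borel σ-algebra, let μ be a Borel probability measure on M with μ({v ∈ M : d(u,v) = r}) = 0 for every r ≥ 0, let X₁,…,Xₙ be i.i.d. with law μ, and fix τ ∈ [1/n, 1]. Then almost surely the following holds: a τ-th empirical local quantile at u exists, and every τ-th empirical local quantile X_j satisfies τ ≤ F_n(u,X_j) < τ + 1/n; equivalently, setting Δ_j := F_μ(u,X_j) − F_n(u,X_j), one has τ + Δ_j ≤ F_μ(u,X_j) < τ + 1/n + Δ_j, i.e. X_j lies in the set difference of inner quantile regions q̃(u, τ + 1/n + Δ_j) \ q̃(u, τ + Δ_j). -/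

import Mathlib

open MeasureTheory Metric ProbabilityTheory

/-- The empirical metric distribution function
`F_n(u,v) = (1/n)·#{i : dist u (x i) ≤ dist u v}`. -/
noncomputable def emdf {M : Type*} [MetricSpace M] {n : ℕ}
    (x : Fin n → M) (u v : M) : ℝ :=
  ((Finset.univ.filter fun i => dist u (x i) ≤ dist u v).card : ℝ) / n

/-- The metric distribution function `F_μ(u,v) = μ(closedBall u (dist u v))`. -/
noncomputable def mdf {M : Type*} [MetricSpace M] [MeasurableSpace M]
    (μ : Measure M) (u v : M) : ℝ :=
  (μ (closedBall u (dist u v))).toReal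

/-- `x j` is a `τ`-th empirical local quantile at `u`:
`F_n(u, x_j) ≥ τ` and `F_n(u, x_j)` is minimal among sample values `≥ τ`. -/
def IsEmpLocQuantile {M : Type*} [MetricSpace M] {n : ℕ}
    (x : Fin n → M) (u : M) (τ : ℝ) (j : Fin n) : Prop :=
  τ ≤ emdf x u (x j) ∧ ∀ i : Fin n, τ ≤ emdf x u (x i) → emdf x u (x j) ≤ emdf x u (x i)

/-- Deterministic core: if the distances to `u` are pairwise distinct, a `τ`-th empirical
local quantile exists and every quantile lies in the band `[τ, τ + 1/n)`. -/
lemma det_band {M : Type*} [MetricSpace M] {n : ℕ} (hn : 0 < n)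
    (x : Fin n → M) (u : M)
    (hd : Function.Injective fun i => dist u (x i))
    (τ : ℝ) (hτ1 : 1 / (n : ℝ) ≤ τ) (hτ2 : τ ≤ 1) :
    (∃ j, IsEmpLocQuantile x u τ j) ∧
      ∀ j, IsEmpLocQuantile x u τ j →
        τ ≤ emdf x u (x j) ∧ emdf x u (x j) < τ + 1 / (n : ℝ) := by
  have hn' : (0:ℝ) < n := by exact_mod_cast hn
  set c : Fin n → ℕ := fun i => (Finset.univ.filter fun i' => dist u (x i') ≤ dist u (x i)).card with hc
  have hemdf : ∀ i, emdf x u (x i) = (c i : ℝ) / n := fun i => rfl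
  have hc1 : ∀ i, 1 ≤ c i := by
    intro i
    have hi : i ∈ Finset.univ.filter fun i' => dist u (x i') ≤ dist u (x i) := by simp
    exact Finset.card_pos.mpr ⟨i, hi⟩
  have hcn : ∀ i, c i ≤ n := fun i => le_trans (Finset.card_filter_le _ _) (by simp)
  have hmono : ∀ i j, dist u (x i) < dist u (x j) → c i < c j := by
    intro i j hij
    apply Finset.card_lt_card
    constructor
    · intro k hk
      simp only [Finset.mem_filter, Finset.mem_univ, true_and] at *
      exact le_trans hk hij.le
    · intro hsub
      have hj := hsub (by simp : j ∈ _)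
      simp only [Finset.mem_filter, Finset.mem_univ, true_and] at hj
      exact absurd hj (not_le.mpr hij)
  have hcinj : Function.Injective c := by
    intro i j hij
    by_contra hne
    rcases lt_trichotomy (dist u (x i)) (dist u (x j)) with h | h | h
    · exact absurd hij (hmono i j h).ne
    · exact hne (hd h)
    · exact absurd hij.symm (hmono j i h).ne
  have hsurj : ∀ k, 1 ≤ k → k ≤ n → ∃ i, c i = k := by
    intro k h1 h2
    have himg : Finset.univ.image c = Finset.Icc 1 n := by
      apply Finset.eq_of_subset_of_card_le
      · intro k hk
        simp only [Finset.mem_image] at hk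
        obtain ⟨i, _, rfl⟩ := hk
        exact Finset.mem_Icc.mpr ⟨hc1 i, hcn i⟩
      · rw [Nat.card_Icc, Finset.card_image_of_injective _ hcinj]
        simp
    have hk : k ∈ Finset.univ.image c := himg ▸ Finset.mem_Icc.mpr ⟨h1, h2⟩
    simpa using hk
  have hne : (Finset.univ : Finset (Fin n)).Nonempty :=
    Finset.univ_nonempty_iff.mpr (Fin.pos_iff_nonempty.mp hn)
  obtain ⟨jm, _, hjm⟩ := Finset.exists_max_image Finset.univ (fun i => dist u (x i)) hne
  have hjm1 : emdf x u (x jm) = 1 := by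
    have hfil : (Finset.univ.filter fun i' => dist u (x i') ≤ dist u (x jm)) = Finset.univ := by
      apply Finset.filter_true_of_mem
      intro i _; exact hjm i (Finset.mem_univ i)
    rw [hemdf, hc]
    simp only [hfil, Finset.card_univ, Fintype.card_fin]
    exact div_self hn'.ne'
  have hSne : (Finset.univ.filter fun i => τ ≤ emdf x u (x i)).Nonempty :=
    ⟨jm, by simp [hjm1, hτ2]⟩
  obtain ⟨j0, hj0mem, hj0min⟩ :=
    Finset.exists_min_image (Finset.univ.filter fun i => τ ≤ emdf x u (x i))
      (fun i => emdf x u (x i)) hSne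
  simp only [Finset.mem_filter, Finset.mem_univ, true_and] at hj0mem
  refine ⟨⟨j0, hj0mem, fun i hi => hj0min i (by simp [hi])⟩, ?_⟩
  intro j hj
  refine ⟨hj.1, ?_⟩
  by_contra hge
  push_neg at hge
  rw [hemdf] at hge
  have h2 : 2 ≤ c j := by
    have htwo : (2:ℝ)/n = 1/n + 1/n := by ring
    have h2r : (2:ℝ)/n ≤ (c j : ℝ)/n := by rw [htwo]; linarith
    have := (div_le_div_iff_of_pos_right hn').mp h2r
    exact_mod_cast this
  obtain ⟨i, hi⟩ := hsurj (c j - 1) (by omega) (by have := hcn j; omega)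
  have hci : (c i : ℝ) = (c j : ℝ) - 1 := by
    have : ((c j - 1 : ℕ) : ℝ) = (c j : ℝ) - 1 := by
      push_cast [Nat.cast_sub (by omega : 1 ≤ c j)]; ring
    rw [hi, this]
  have hiτ : τ ≤ emdf x u (x i) := by
    rw [hemdf, hci, sub_div]
    linarith
  have hmin := hj.2 i hiτ
  rw [hemdf, hemdf, hci, sub_div] at hmin
  have h1n : (0:ℝ) < 1 / n := by positivity
  linarith

/-- Almost surely, a `τ`-th empirical local quantile at `u` exists, and
every such quantile `X_j` satisfies `τ ≤ F_n(u,X_j) < τ + 1/n`; equivalently, with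
`Δ_j = F_μ(u,X_j) − F_n(u,X_j)`, `X_j` lies in
`q̃(u, τ + 1/n + Δ_j) \ q̃(u, τ + Δ_j)` where `q̃(u,t) = {v | F_μ(u,v) < t}`. -/
theorem emp_local_quantile_band
    {M : Type*} [MetricSpace M] [MeasurableSpace M] [BorelSpace M]
    (μ : Measure M) [IsProbabilityMeasure μ] (u : M)
    (hsph : ∀ r : ℝ, 0 ≤ r → μ {v | dist u v = r} = 0)
    {Ω : Type*} [MeasureSpace Ω] [IsProbabilityMeasure (ℙ : Measure Ω)]
    {n : ℕ} (hn : 0 < n) (X : Fin n → Ω → M)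
    (hXmeas : ∀ i, Measurable (X i))
    (hXlaw : ∀ i, Measure.map (X i) ℙ = μ)
    (hXindep : iIndepFun X ℙ)
    (τ : ℝ) (hτ1 : 1 / (n : ℝ) ≤ τ) (hτ2 : τ ≤ 1) :
    ∀ᵐ ω ∂(ℙ : Measure Ω),
      (∃ j : Fin n, IsEmpLocQuantile (fun i => X i ω) u τ j) ∧
      ∀ j : Fin n, IsEmpLocQuantile (fun i => X i ω) u τ j →
        (τ ≤ emdf (fun i => X i ω) u (X j ω) ∧
          emdf (fun i => X i ω) u (X j ω) < τ + 1 / (n : ℝ)) ∧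
        X j ω ∈
          {v : M | mdf μ u v <
              τ + 1 / (n : ℝ) + (mdf μ u (X j ω) - emdf (fun i => X i ω) u (X j ω))} \
          {v : M | mdf μ u v <
              τ + (mdf μ u (X j ω) - emdf (fun i => X i ω) u (X j ω))} := by
  have hdm : Measurable fun v : M => dist u v :=
    (continuous_const.dist continuous_id).measurable
  have hS : MeasurableSet {p : M × M | dist u p.1 = dist u p.2} :=
    measurableSet_eq_fun (hdm.comp measurable_fst) (hdm.comp measurable_snd)
  have hprod : (μ.prod μ) {p : M × M | dist u p.1 = dist u p.2} = 0 := by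
    rw [Measure.prod_apply hS]
    have hsec : ∀ a : M, μ (Prod.mk a ⁻¹' {p : M × M | dist u p.1 = dist u p.2}) = 0 := by
      intro a
      have heq : Prod.mk a ⁻¹' {p : M × M | dist u p.1 = dist u p.2}
          = {b | dist u b = dist u a} := by
        ext b; simp [eq_comm]
      rw [heq]
      exact hsph (dist u a) dist_nonneg
    rw [lintegral_congr hsec, lintegral_zero]
  have key : ∀ i j : Fin n, i ≠ j →
      (ℙ : Measure Ω) {ω | dist u (X i ω) = dist u (X j ω)} = 0 := by
    intro i j hij
    have hpair : Measure.map (fun ω => (X i ω, X j ω)) ℙ = μ.prod μ := by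
      have h := (indepFun_iff_map_prod_eq_prod_map_map (hXmeas i).aemeasurable
        (hXmeas j).aemeasurable).mp (hXindep.indepFun hij)
      rw [h, hXlaw i, hXlaw j]
    have hset : {ω | dist u (X i ω) = dist u (X j ω)}
        = (fun ω => (X i ω, X j ω)) ⁻¹' {p : M × M | dist u p.1 = dist u p.2} := rfl
    rw [hset, ← Measure.map_apply ((hXmeas i).prodMk (hXmeas j)) hS, hpair, hprod]
  have hae : ∀ᵐ ω ∂(ℙ : Measure Ω), ∀ i j : Fin n, i ≠ j →
      dist u (X i ω) ≠ dist u (X j ω) := by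
    rw [ae_all_iff]
    intro i
    rw [ae_all_iff]
    intro j
    by_cases hij : i = j
    · filter_upwards with ω h; exact absurd hij h
    · rw [ae_iff]
      refine measure_mono_null ?_ (key i j hij)
      intro ω hω
      simp only [Set.mem_setOf_eq] at hω ⊢
      push_neg at hω
      exact hω.2
  filter_upwards [hae] with ω hω
  have hinj : Function.Injective fun i => dist u (X i ω) := by
    intro i j h
    by_contra hne
    exact hω i j hne h
  obtain ⟨hex, hband⟩ := det_band hn (fun i => X i ω) u hinj τ hτ1 hτ2
  refine ⟨hex, ?_⟩
  intro j hj
  have hb := hband j hj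
  refine ⟨hb, ?_⟩
  obtain ⟨hb1, hb2⟩ := hb
  constructor
  · simp only [Set.mem_setOf_eq]
    linarith
  · simp only [Set.mem_setOf_eq, not_lt]
    linarith
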